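/- Let q ≥ 0 and let θ₀(h) ∈ ℝ^{q+1}, h ∈ (0,h₀], be a family of unit vectors (‖θ₀(h)‖ = 1 for all h) admitting a classical expansion θ₀(h) ∼ Σ_{k≥0} h^k θ₀^{(k)}. Then there exist h₁ ∈ (0,h₀] and families θ₁(h),…,θ_q(h) ∈ ℝ^{q+1}, h ∈ (0,h₁], each admitting a classical expansion θ_j(h) ∼ Σ_{k≥0} h^k θ_j^{(k)}, such that: (i) for every h ∈ (0,h₁] the family (θ₀(h), θ₁(h), …, θ_q(h)) is an orthonormal basis of ℝ^{q+1}; (ii) for every 1 ≤ j ≤ q the leading term θ_j^{(0)} is orthogonal to the leading term θ₀^{(0)}. -/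

import Mathlib

open scoped RealInnerProductSpace

noncomputable section

namespace OrthoCompletionAux

variable {F G : Type*} [NormedAddCommGroup F] [NormedSpace ℝ F]
  [NormedAddCommGroup G] [NormedSpace ℝ G]

/-- Classical expansion on `(0, h₁]`. -/
def ClExp (h₁ : ℝ) (f : ℝ → F) (a : ℕ → F) : Prop :=
  ∀ N : ℕ, ∃ C > 0, ∀ h ∈ Set.Ioc (0 : ℝ) h₁,
    ‖f h - ∑ k ∈ Finset.range (N + 1), h ^ k • a k‖ ≤ C * h ^ (N + 1)

namespace ClExp

variable {h₁ : ℝ} {f g : ℝ → F} {a b : ℕ → F}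

theorem congr (hf : ClExp h₁ f a) (hfg : ∀ h ∈ Set.Ioc (0:ℝ) h₁, f h = g h) :
    ClExp h₁ g a := by
  intro N
  obtain ⟨C, hC, hb⟩ := hf N
  exact ⟨C, hC, fun h hh => by rw [← hfg h hh]; exact hb h hh⟩

theorem mono {h₂ : ℝ} (hf : ClExp h₁ f a) (hle : h₂ ≤ h₁) : ClExp h₂ f a := by
  intro N
  obtain ⟨C, hC, hb⟩ := hf N
  exact ⟨C, hC, fun h hh => hb h ⟨hh.1, hh.2.trans hle⟩⟩

theorem add (hf : ClExp h₁ f a) (hg : ClExp h₁ g b) :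
    ClExp h₁ (fun h => f h + g h) (fun n => a n + b n) := by
  intro N
  obtain ⟨C, hC, hb⟩ := hf N
  obtain ⟨D, hD, hd⟩ := hg N
  refine ⟨C + D, by positivity, fun h hh => ?_⟩
  have : (f h + g h) - ∑ k ∈ Finset.range (N + 1), h ^ k • (a k + b k)
      = (f h - ∑ k ∈ Finset.range (N + 1), h ^ k • a k)
        + (g h - ∑ k ∈ Finset.range (N + 1), h ^ k • b k) := by
    simp [smul_add, Finset.sum_add_distrib]; abel
  rw [this, add_mul]
  exact (norm_add_le _ _).trans (add_le_add (hb h hh) (hd h hh))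

theorem neg (hf : ClExp h₁ f a) : ClExp h₁ (fun h => -(f h)) (fun n => -(a n)) := by
  intro N
  obtain ⟨C, hC, hb⟩ := hf N
  refine ⟨C, hC, fun h hh => ?_⟩
  have : -f h - ∑ k ∈ Finset.range (N + 1), h ^ k • (-(a k))
      = -(f h - ∑ k ∈ Finset.range (N + 1), h ^ k • a k) := by
    simp [smul_neg]; abel
  rw [this, norm_neg]; exact hb h hh

theorem sub (hf : ClExp h₁ f a) (hg : ClExp h₁ g b) :
    ClExp h₁ (fun h => f h - g h) (fun n => a n - b n) := by
  have := hf.add hg.neg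
  simpa [sub_eq_add_neg] using this

theorem clm (hf : ClExp h₁ f a) (L : F →L[ℝ] G) :
    ClExp h₁ (fun h => L (f h)) (fun n => L (a n)) := by
  intro N
  obtain ⟨C, hC, hb⟩ := hf N
  refine ⟨(‖L‖ + 1) * C, by positivity, fun h hh => ?_⟩
  have e : L (f h) - ∑ k ∈ Finset.range (N + 1), h ^ k • L (a k)
      = L (f h - ∑ k ∈ Finset.range (N + 1), h ^ k • a k) := by
    simp [map_sub, map_sum, map_smul]
  rw [e, mul_assoc]
  calc ‖L _‖ ≤ ‖L‖ * ‖f h - ∑ k ∈ Finset.range (N + 1), h ^ k • a k‖ := L.le_opNorm _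
    _ ≤ ‖L‖ * (C * h ^ (N + 1)) := by
        apply mul_le_mul_of_nonneg_left (hb h hh) (norm_nonneg _)
    _ ≤ (‖L‖ + 1) * (C * h ^ (N + 1)) := by
        apply mul_le_mul_of_nonneg_right (by linarith [norm_nonneg L])
        have := hh.1
        positivity

theorem monomial (hh₁ : 0 < h₁) (m : ℕ) (d : F) :
    ClExp h₁ (fun h => h ^ m • d) (fun n => if n = m then d else 0) := by
  intro N
  refine ⟨(max 1 h₁) ^ m * ‖d‖ + 1, by positivity, fun h hh => ?_⟩
  have hsum : ∑ k ∈ Finset.range (N + 1), h ^ k • (if k = m then d else 0)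
      = if m ∈ Finset.range (N + 1) then h ^ m • d else 0 := by
    rw [← Finset.sum_ite_eq' (Finset.range (N + 1)) m (fun k => h ^ k • d)]
    apply Finset.sum_congr rfl
    intro k _
    by_cases hk : k = m <;> simp [hk]
  rw [hsum]
  by_cases hm : m ∈ Finset.range (N + 1)
  · rw [if_pos hm, sub_self, norm_zero]
    have := hh.1
    positivity
  · rw [if_neg hm, sub_zero, norm_smul, norm_pow, Real.norm_eq_abs,
      abs_of_pos hh.1]
    have hmN : N + 1 ≤ m := by
      simpa [Finset.mem_range, not_lt] using hm
    have h1 : h ^ m = h ^ (N + 1) * h ^ (m - (N + 1)) := by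
      rw [← pow_add]; congr 1; omega
    have hle1 : h ^ (m - (N + 1)) ≤ (max 1 h₁) ^ m := by
      calc h ^ (m - (N + 1)) ≤ (max 1 h₁) ^ (m - (N + 1)) := by
            apply pow_le_pow_left₀ hh.1.le (hh.2.trans (le_max_right _ _))
        _ ≤ (max 1 h₁) ^ m := by
            apply pow_le_pow_right₀ (le_max_left _ _); omega
    calc h ^ m * ‖d‖ = h ^ (m - (N + 1)) * ‖d‖ * h ^ (N + 1) := by rw [h1]; ring
      _ ≤ ((max 1 h₁) ^ m * ‖d‖ + 1) * h ^ (N + 1) := by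
          have hp : (0:ℝ) < h ^ (N+1) := pow_pos hh.1 _
          apply mul_le_mul_of_nonneg_right _ hp.le
          have : h ^ (m - (N+1)) * ‖d‖ ≤ (max 1 h₁) ^ m * ‖d‖ :=
            mul_le_mul_of_nonneg_right hle1 (norm_nonneg _)
          linarith

theorem zero (hh₁ : 0 < h₁) : ClExp h₁ (fun _ => (0 : F)) (fun _ => 0) := by
  have := (monomial (F := F) hh₁ 0 (0 : F))
  simpa using this

theorem const (hh₁ : 0 < h₁) (c : F) :
    ClExp h₁ (fun _ => c) (fun n => if n = 0 then c else 0) := by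
  have := (monomial hh₁ 0 c)
  simpa using this

theorem finsetSum {ι : Type*} (s : Finset ι) (f : ι → ℝ → F) (A : ι → ℕ → F)
    (hf : ∀ i ∈ s, ClExp h₁ (f i) (A i)) (hh₁ : 0 < h₁) :
    ClExp h₁ (fun h => ∑ i ∈ s, f i h) (fun n => ∑ i ∈ s, A i n) := by
  classical
  induction s using Finset.induction_on with
  | empty => simpa using zero (F := F) hh₁
  | insert x t hx ih =>
      have h1 := hf x (Finset.mem_insert_self x t)
      have h2 := ih (fun i hi => hf i (Finset.mem_insert_of_mem hi))
      have := h1.add h2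
      simpa [Finset.sum_insert hx] using this

end ClExp

/-- Reorganisation of the truncated Cauchy product. -/
theorem cauchy_key (a : ℕ → ℝ) (b : ℕ → F) (h : ℝ) (N : ℕ) :
    ∑ n ∈ Finset.range (N + 1), h ^ n • (∑ k ∈ Finset.range (n + 1), a k • b (n - k))
      = ∑ k ∈ Finset.range (N + 1), (h ^ k * a k) •
          (∑ m ∈ Finset.range (N - k + 1), h ^ m • b m) := by
  induction N with
  | zero => simp [mul_smul]
  | succ N ih =>
      have e1 : ∀ k ∈ Finset.range (N + 1),
          (h ^ k * a k) • (∑ m ∈ Finset.range (N + 1 - k + 1), h ^ m • b m)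
          = (h ^ k * a k) • (∑ m ∈ Finset.range (N - k + 1), h ^ m • b m)
            + h ^ (N + 1) • (a k • b (N + 1 - k)) := by
        intro k hk
        have hkN : k ≤ N := by simpa [Nat.lt_succ_iff] using hk
        have h2 : N + 1 - k = (N - k) + 1 := by omega
        rw [h2, Finset.sum_range_succ, smul_add, ← h2]
        congr 1
        simp only [smul_smul]
        have hp : h ^ k * h ^ (N + 1 - k) = h ^ (N + 1) := by
          rw [← pow_add]; congr 1; omega
        rw [show h ^ k * a k * h ^ (N + 1 - k) = h ^ (N + 1) * a k from by
          linear_combination a k * hp]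
      rw [Finset.sum_range_succ, ih]
      conv_rhs => rw [Finset.sum_range_succ]
      rw [Finset.sum_congr rfl e1, Finset.sum_add_distrib]
      have e2 : h ^ (N + 1) • (∑ k ∈ Finset.range (N + 1 + 1), a k • b (N + 1 - k))
          = (∑ k ∈ Finset.range (N + 1), h ^ (N + 1) • (a k • b (N + 1 - k)))
            + (h ^ (N + 1) * a (N + 1)) •
              (∑ m ∈ Finset.range (N + 1 - (N + 1) + 1), h ^ m • b m) := by
        rw [Finset.sum_range_succ, smul_add, Finset.smul_sum]
        congr 1
        simp [mul_smul]
      rw [e2]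
      abel

theorem ClExp.smul {h₁ : ℝ} {f : ℝ → ℝ} {a : ℕ → ℝ} {g : ℝ → F} {b : ℕ → F}
    (hf : ClExp h₁ f a) (hg : ClExp h₁ g b) (hh₁ : 0 < h₁) :
    ClExp h₁ (fun h => f h • g h)
      (fun n => ∑ k ∈ Finset.range (n + 1), a k • b (n - k)) := by
  intro N
  obtain ⟨Cf, hCf, hbf⟩ := hf N
  choose Cg hCg hbg using hg
  set Mg : ℝ := ‖b 0‖ + Cg 0 * h₁ + 1 with hMgdef
  have hMg : ∀ h ∈ Set.Ioc (0:ℝ) h₁, ‖g h‖ ≤ Mg := by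
    intro h hh
    have h0 : ‖g h - b 0‖ ≤ Cg 0 * h := by simpa using hbg 0 h hh
    have : ‖g h‖ - ‖b 0‖ ≤ ‖g h - b 0‖ := norm_sub_norm_le (g h) (b 0)
    have hCh : Cg 0 * h ≤ Cg 0 * h₁ := by
      apply mul_le_mul_of_nonneg_left hh.2 (hCg 0).le
    linarith
  have hMg0 : 0 ≤ Mg := by
    have h1 := hCg 0
    have h2 := norm_nonneg (b 0)
    nlinarith
  refine ⟨Cf * Mg + (∑ k ∈ Finset.range (N + 1), |a k| * Cg (N - k)) + 1, ?_, ?_⟩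
  · have h1 : 0 ≤ Cf * Mg := mul_nonneg hCf.le hMg0
    have h2 : 0 ≤ ∑ k ∈ Finset.range (N + 1), |a k| * Cg (N - k) :=
      Finset.sum_nonneg fun k _ => mul_nonneg (abs_nonneg _) (hCg _).le
    linarith
  intro h hh
  have hhp : (0:ℝ) < h := hh.1
  have key := cauchy_key a b h N
  have decomp : f h • g h
        - ∑ n ∈ Finset.range (N + 1), h ^ n •
            (∑ k ∈ Finset.range (n + 1), a k • b (n - k))
      = (f h - ∑ k ∈ Finset.range (N + 1), h ^ k • a k) • g h
        + ∑ k ∈ Finset.range (N + 1), (h ^ k * a k) •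
            (g h - ∑ m ∈ Finset.range (N - k + 1), h ^ m • b m) := by
    rw [key]
    simp only [smul_sub, Finset.sum_sub_distrib, ← Finset.sum_smul, sub_smul, smul_eq_mul]
    abel
  rw [decomp]
  have hb1 : ‖(f h - ∑ k ∈ Finset.range (N + 1), h ^ k • a k) • g h‖
      ≤ Cf * h ^ (N + 1) * Mg := by
    rw [norm_smul, Real.norm_eq_abs]
    have := hbf h hh
    rw [Real.norm_eq_abs] at this
    exact mul_le_mul (by simpa using this) (hMg h hh) (norm_nonneg _)
      (by positivity)
  have hb2 : ∀ k ∈ Finset.range (N + 1),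
      ‖(h ^ k * a k) • (g h - ∑ m ∈ Finset.range (N - k + 1), h ^ m • b m)‖
        ≤ |a k| * Cg (N - k) * h ^ (N + 1) := by
    intro k hk
    have hkN : k ≤ N := by simpa [Nat.lt_succ_iff] using hk
    rw [norm_smul, Real.norm_eq_abs, abs_mul, abs_pow, abs_of_pos hh.1]
    have hq := hbg (N - k) h hh
    calc h ^ k * |a k| * ‖g h - ∑ m ∈ Finset.range (N - k + 1), h ^ m • b m‖
        ≤ h ^ k * |a k| * (Cg (N - k) * h ^ (N - k + 1)) := by
          apply mul_le_mul_of_nonneg_left hq (by positivity)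
      _ = |a k| * Cg (N - k) * (h ^ k * h ^ (N - k + 1)) := by ring
      _ = |a k| * Cg (N - k) * h ^ (N + 1) := by
          rw [← pow_add]; congr 2; omega
  calc ‖_ + _‖ ≤ Cf * h ^ (N + 1) * Mg
        + ∑ k ∈ Finset.range (N + 1), |a k| * Cg (N - k) * h ^ (N + 1) := by
        refine (norm_add_le _ _).trans (add_le_add hb1 ?_)
        exact (norm_sum_le _ _).trans (Finset.sum_le_sum hb2)
    _ = (Cf * Mg + ∑ k ∈ Finset.range (N + 1), |a k| * Cg (N - k)) * h ^ (N + 1) := by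
        rw [← Finset.sum_mul]; ring
    _ ≤ (Cf * Mg + (∑ k ∈ Finset.range (N + 1), |a k| * Cg (N - k)) + 1) * h ^ (N + 1) := by
        have : (0:ℝ) < h ^ (N + 1) := pow_pos hh.1 _
        nlinarith

/-- Truncated polynomials have classical expansions. -/
theorem ClExp.poly {h₁ : ℝ} (hh₁ : 0 < h₁) (M : ℕ) (d : ℕ → F) :
    ClExp h₁ (fun h => ∑ k ∈ Finset.range M, h ^ k • d k)
      (fun n => if n < M then d n else 0) := by
  have := ClExp.finsetSum (Finset.range M) (fun k h => h ^ k • d k)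
    (fun k n => if n = k then d k else 0) (fun k _ => ClExp.monomial hh₁ k (d k)) hh₁
  have e : ∀ n : ℕ, (∑ k ∈ Finset.range M, if n = k then d k else 0)
      = if n < M then d n else 0 := by
    intro n
    rw [Finset.sum_ite_eq (Finset.range M) n d]
    simp
  simpa [funext e] using this

/-- Inverse of a function with a classical expansion, bounded below. -/
theorem ClExp.inv {h₁ : ℝ} {f : ℝ → ℝ} {a : ℕ → ℝ} (hf : ClExp h₁ f a) (hh₁ : 0 < h₁)
    {δ : ℝ} (hδ : 0 < δ) (hfδ : ∀ h ∈ Set.Ioc (0:ℝ) h₁, δ ≤ f h) :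
    ∃ b : ℕ → ℝ, ClExp h₁ (fun h => (f h)⁻¹) b := by
  have ha0 : δ ≤ a 0 := by
    by_contra hlt
    push_neg at hlt
    obtain ⟨C, hC, hb⟩ := hf 0
    set ε := δ - a 0 with hε
    have hεpos : 0 < ε := by linarith
    set h := min h₁ (ε / (2 * C)) with hhdef
    have hhpos : 0 < h := lt_min hh₁ (by positivity)
    have hhmem : h ∈ Set.Ioc (0:ℝ) h₁ := ⟨hhpos, min_le_left _ _⟩
    have h1 : |f h - a 0| ≤ C * h := by simpa using hb h hhmem
    have h2 : C * h ≤ ε / 2 := by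
      have : h ≤ ε / (2 * C) := min_le_right _ _
      calc C * h ≤ C * (ε / (2 * C)) := by
            exact mul_le_mul_of_nonneg_left this hC.le
        _ = ε / 2 := by field_simp
    have h3 := hfδ h hhmem
    have := abs_le.1 h1
    simp only [hε] at h2 ⊢
    linarith [this.1, this.2]
  have ha0' : a 0 ≠ 0 := by linarith
  set A : PowerSeries ℝ := PowerSeries.mk a with hA
  set b : ℕ → ℝ := fun n => PowerSeries.coeff n A⁻¹ with hbdef
  have hcauchy : ∀ n : ℕ, (∑ k ∈ Finset.range (n + 1), a k * b (n - k))
      = if n = 0 then 1 else 0 := by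
    intro n
    have hmul : A * A⁻¹ = 1 := by
      apply PowerSeries.mul_inv_cancel
      simpa [hA, PowerSeries.constantCoeff_mk] using ha0'
    have := congrArg (PowerSeries.coeff n) hmul
    rw [PowerSeries.coeff_mul, PowerSeries.coeff_one,
      Finset.Nat.sum_antidiagonal_eq_sum_range_succ_mk] at this
    simpa [hA, hbdef] using this
  refine ⟨b, ?_⟩
  intro N
  have hpoly := ClExp.poly hh₁ (N + 1) b
  have hprod := hf.smul hpoly hh₁ N
  obtain ⟨C, hC, hb⟩ := hprod
  refine ⟨C / δ + 1, by positivity, fun h hh => ?_⟩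
  have hhp : (0:ℝ) < h := hh.1
  have hfh : δ ≤ f h := hfδ h hh
  have hfh0 : f h ≠ 0 := by linarith
  have hcoeff : ∀ n ∈ Finset.range (N + 1),
      h ^ n • (∑ k ∈ Finset.range (n + 1), a k • (if n - k < N + 1 then b (n - k) else 0))
        = h ^ n • (if n = 0 then (1:ℝ) else 0) := by
    intro n hn
    have hnN : n ≤ N := by simpa [Nat.lt_succ_iff] using hn
    congr 1
    rw [← hcauchy n]
    apply Finset.sum_congr rfl
    intro k hk
    have : n - k < N + 1 := by omega
    simp [this, smul_eq_mul]
  have hone : ∑ n ∈ Finset.range (N + 1),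
        h ^ n • (∑ k ∈ Finset.range (n + 1), a k • (if n - k < N + 1 then b (n - k) else 0))
      = 1 := by
    rw [Finset.sum_congr rfl hcoeff]
    have e : ∀ x ∈ Finset.range (N+1), h ^ x • (if x = 0 then (1:ℝ) else 0)
        = if x = 0 then 1 else 0 := by
      intro x hx
      by_cases hx0 : x = 0 <;> simp [hx0]
    rw [Finset.sum_congr rfl e,
      Finset.sum_ite_eq' (Finset.range (N+1)) 0 (fun _ => (1:ℝ))]
    simp
  set p : ℝ := ∑ k ∈ Finset.range (N + 1), h ^ k • b k with hpdef
  have hb' : |f h * p - 1| ≤ C * h ^ (N + 1) := by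
    have h5 := hb h hh
    simp only [smul_eq_mul] at h5 hone ⊢
    rw [hone] at h5
    simpa [Real.norm_eq_abs, hpdef] using h5
  have key : (f h)⁻¹ - p = -(f h)⁻¹ * (f h * p - 1) := by
    field_simp
    ring
  rw [Real.norm_eq_abs, key, abs_mul, abs_neg, abs_inv]
  have hfabs : δ ≤ |f h| := le_trans hfh (le_abs_self _)
  have h6 : |f h|⁻¹ ≤ δ⁻¹ := by
    exact inv_anti₀ hδ hfabs
  calc |f h|⁻¹ * |f h * p - 1| ≤ δ⁻¹ * (C * h ^ (N + 1)) := by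
        exact mul_le_mul h6 hb' (abs_nonneg _) (le_of_lt (inv_pos.2 hδ))
    _ = (C / δ) * h ^ (N + 1) := by field_simp
    _ ≤ (C / δ + 1) * h ^ (N + 1) := by
        have : (0:ℝ) < h ^ (N + 1) := pow_pos hhp _
        nlinarith

section Geometry

variable {E : Type*} [NormedAddCommGroup E] [InnerProductSpace ℝ E]

/-- The algebraic identity underlying orthonormality of the rotated frame. -/
theorem ortho_aux (u v₀ vi vj : E) (huu : ⟪u, u⟫ = 1) (hv₀ : ⟪v₀, v₀⟫ = 1)
    (hvi : ⟪vi, v₀⟫ = 0) (hvj : ⟪vj, v₀⟫ = 0) (hs : 1 + ⟪v₀, u⟫ ≠ 0) :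
    ⟪vi - (⟪vi, u⟫ * (1 + ⟪v₀, u⟫)⁻¹) • (v₀ + u),
      vj - (⟪vj, u⟫ * (1 + ⟪v₀, u⟫)⁻¹) • (v₀ + u)⟫ = ⟪vi, vj⟫ := by
  have h1 : ⟪v₀, vi⟫ = 0 := by rw [real_inner_comm]; exact hvi
  have h2 : ⟪v₀, vj⟫ = 0 := by rw [real_inner_comm]; exact hvj
  have h3 : ⟪u, vj⟫ = ⟪vj, u⟫ := real_inner_comm _ _
  have h4 : ⟪u, v₀⟫ = ⟪v₀, u⟫ := real_inner_comm _ _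
  simp only [inner_sub_left, inner_sub_right, inner_add_left, inner_add_right,
    real_inner_smul_left, real_inner_smul_right, hvi, hvj, h1, h2, h3, h4, hv₀, huu]
  field_simp
  ring

/-- Orthogonality of the new frame vectors to `u`. -/
theorem ortho_aux2 (u v₀ vj : E) (huu : ⟪u, u⟫ = 1) (hvj : ⟪vj, v₀⟫ = 0)
    (hs : 1 + ⟪v₀, u⟫ ≠ 0) :
    ⟪u, vj - (⟪vj, u⟫ * (1 + ⟪v₀, u⟫)⁻¹) • (v₀ + u)⟫ = 0 := by
  have h3 : ⟪u, vj⟫ = ⟪vj, u⟫ := real_inner_comm _ _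
  have h4 : ⟪u, v₀⟫ = ⟪v₀, u⟫ := real_inner_comm _ _
  simp only [inner_sub_right, inner_add_right, real_inner_smul_right, h3, h4, huu]
  field_simp
  ring

end Geometry

end OrthoCompletionAux


open OrthoCompletionAux in

/-- **Completion of a classical family of unit vectors to an orthonormal basis with classical
expansions.**  Let `θ₀(h) ∈ ℝ^{q+1}`, `h ∈ (0, h₀]`, be unit vectors admitting a classical
expansion `θ₀(h) ∼ Σ hᵏ θ₀⁽ᵏ⁾`.  Then, shrinking `h₀` to some `h₁`, there are families
`θ₁(h), …, θ_q(h)`, each with a classical expansion, such that for every `h ∈ (0, h₁]` the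
family `(θ₀(h), θ₁(h), …, θ_q(h))` is an orthonormal basis of `ℝ^{q+1}`, and the leading terms
`θⱼ⁽⁰⁾` (`1 ≤ j ≤ q`) are orthogonal to `θ₀⁽⁰⁾`. -/
theorem orthonormal_completion_with_classical_expansion
    (q : ℕ) (h₀ : ℝ) (hh₀ : 0 < h₀)
    (θ0 : ℝ → EuclideanSpace ℝ (Fin (q + 1)))
    (θ0k : ℕ → EuclideanSpace ℝ (Fin (q + 1)))
    (hunit : ∀ h ∈ Set.Ioc (0 : ℝ) h₀, ‖θ0 h‖ = 1)
    (hexp : ∀ N : ℕ, ∃ C > 0, ∀ h ∈ Set.Ioc (0 : ℝ) h₀,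
      ‖θ0 h - ∑ k ∈ Finset.range (N + 1), h ^ k • θ0k k‖ ≤ C * h ^ (N + 1)) :
    ∃ h₁, 0 < h₁ ∧ h₁ ≤ h₀ ∧
      ∃ (θ : Fin q → ℝ → EuclideanSpace ℝ (Fin (q + 1)))
        (θk : Fin q → ℕ → EuclideanSpace ℝ (Fin (q + 1))),
        (∀ j : Fin q, ∀ N : ℕ, ∃ C > 0, ∀ h ∈ Set.Ioc (0 : ℝ) h₁,
          ‖θ j h - ∑ k ∈ Finset.range (N + 1), h ^ k • θk j k‖ ≤ C * h ^ (N + 1)) ∧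
        (∀ h ∈ Set.Ioc (0 : ℝ) h₁,
          Orthonormal ℝ (Fin.cons (θ0 h) (fun j => θ j h) : Fin (q + 1) → _) ∧
          Submodule.span ℝ
            (Set.range (Fin.cons (θ0 h) (fun j => θ j h) : Fin (q + 1) → _)) = ⊤) ∧
        (∀ j : Fin q, ⟪θk j 0, θ0k 0⟫ = 0) := by
  classical
  obtain ⟨C₀, hC₀, hb₀⟩ := hexp 0
  have hb₀' : ∀ h ∈ Set.Ioc (0:ℝ) h₀, ‖θ0 h - θ0k 0‖ ≤ C₀ * h := by
    intro h hh; simpa using hb₀ h hh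
  have hnorm0 : ‖θ0k 0‖ = 1 := by
    by_contra hne
    set ε := |‖θ0k 0‖ - 1| with hεdef
    have hεpos : 0 < ε := abs_pos.2 (sub_ne_zero.2 hne)
    set h := min h₀ (ε / (2 * C₀)) with hhdef
    have hhpos : 0 < h := lt_min hh₀ (by positivity)
    have hmem : h ∈ Set.Ioc (0:ℝ) h₀ := ⟨hhpos, min_le_left _ _⟩
    have h1 : |‖θ0 h‖ - ‖θ0k 0‖| ≤ ‖θ0 h - θ0k 0‖ := abs_norm_sub_norm_le _ _
    have h2 := hb₀' h hmem
    have h3 : C₀ * h ≤ ε / 2 := by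
      have hle : h ≤ ε / (2 * C₀) := min_le_right _ _
      calc C₀ * h ≤ C₀ * (ε / (2 * C₀)) := mul_le_mul_of_nonneg_left hle hC₀.le
        _ = ε / 2 := by field_simp
    rw [hunit h hmem] at h1
    have h4 : ε ≤ ε / 2 := by
      calc ε = |1 - ‖θ0k 0‖| := by rw [hεdef, abs_sub_comm]
        _ ≤ ‖θ0 h - θ0k 0‖ := h1
        _ ≤ C₀ * h := h2
        _ ≤ ε / 2 := h3
    linarith
  -- extend the leading term to an orthonormal basis
  have hcard : Module.finrank ℝ (EuclideanSpace ℝ (Fin (q+1)))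
      = Fintype.card (Fin (q+1)) := by
    simp [finrank_euclideanSpace_fin]
  have hON : Orthonormal ℝ
      (({0} : Set (Fin (q+1))).restrict (fun _ => θ0k 0)) := by
    constructor
    · intro i; exact hnorm0
    · intro i j hij
      exfalso
      apply hij
      have hi := i.2; have hj := j.2
      simp only [Set.mem_singleton_iff] at hi hj
      exact Subtype.ext (hi.trans hj.symm)
  obtain ⟨B, hB⟩ := hON.exists_orthonormalBasis_extension_of_card_eq hcard
  have hB0 : B 0 = θ0k 0 := hB 0 rfl
  have hBo := B.orthonormal
  rw [orthonormal_iff_ite] at hBo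
  -- shrink h₀
  set h₁ := min h₀ (1 / (2 * C₀)) with hh₁def
  have hh₁pos : 0 < h₁ := lt_min hh₀ (by positivity)
  have hh₁le : h₁ ≤ h₀ := min_le_left _ _
  have hexpC : ClExp h₁ θ0 θ0k := ClExp.mono (show ClExp h₀ θ0 θ0k from hexp) hh₁le
  have hclose : ∀ h ∈ Set.Ioc (0:ℝ) h₁, ‖θ0 h - θ0k 0‖ ≤ 1/2 := by
    intro h hh
    have hmem : h ∈ Set.Ioc (0:ℝ) h₀ := ⟨hh.1, hh.2.trans hh₁le⟩
    have h2 := hb₀' h hmem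
    have h3 : C₀ * h ≤ 1/2 := by
      have hle : h ≤ 1/(2*C₀) := hh.2.trans (min_le_right _ _)
      calc C₀ * h ≤ C₀ * (1/(2*C₀)) := mul_le_mul_of_nonneg_left hle hC₀.le
        _ = 1/2 := by field_simp
    linarith
  have hunit1 : ∀ h ∈ Set.Ioc (0:ℝ) h₁, ‖θ0 h‖ = 1 :=
    fun h hh => hunit h ⟨hh.1, hh.2.trans hh₁le⟩
  -- the scalar function 1 + ⟪v₀, u(h)⟫
  have hsexp : ClExp h₁ (fun h => 1 + ⟪θ0k 0, θ0 h⟫)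
      (fun n => (if n = 0 then (1:ℝ) else 0) + ⟪θ0k 0, θ0k n⟫) := by
    have h1 := (ClExp.const hh₁pos (1:ℝ)).add (hexpC.clm (innerSL ℝ (θ0k 0)))
    exact h1
  have hslb : ∀ h ∈ Set.Ioc (0:ℝ) h₁, 1 ≤ 1 + ⟪θ0k 0, θ0 h⟫ := by
    intro h hh
    have h1 : ⟪θ0k 0, θ0 h⟫ = ⟪θ0k 0, θ0k 0⟫ + ⟪θ0k 0, θ0 h - θ0k 0⟫ := by
      rw [← inner_add_right]; congr 1; abel
    have h2 : ⟪θ0k 0, θ0k 0⟫ = 1 := by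
      rw [real_inner_self_eq_norm_mul_norm, hnorm0]; norm_num
    have h3 : |⟪θ0k 0, θ0 h - θ0k 0⟫| ≤ ‖θ0k 0‖ * ‖θ0 h - θ0k 0‖ :=
      abs_real_inner_le_norm _ _
    rw [hnorm0, one_mul] at h3
    have h4 := hclose h hh
    have h5 := abs_le.1 h3
    rw [h1, h2]
    linarith [h5.1]
  have hsne : ∀ h ∈ Set.Ioc (0:ℝ) h₁, (1 + ⟪θ0k 0, θ0 h⟫) ≠ 0 := fun h hh => by
    have := hslb h hh; linarith
  obtain ⟨sb, hsb⟩ := hsexp.inv hh₁pos one_pos hslb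
  set θ : Fin q → ℝ → EuclideanSpace ℝ (Fin (q+1)) := fun j h =>
    B j.succ - (⟪B j.succ, θ0 h⟫ * (1 + ⟪θ0k 0, θ0 h⟫)⁻¹) • (θ0k 0 + θ0 h)
    with hθdef
  have hθexp : ∀ j : Fin q, ∃ D : ℕ → EuclideanSpace ℝ (Fin (q+1)),
      ClExp h₁ (θ j) D ∧ D 0 = B j.succ := by
    intro j
    have hc : ClExp h₁ (fun h => ⟪B j.succ, θ0 h⟫) (fun n => ⟪B j.succ, θ0k n⟫) :=
      hexpC.clm (innerSL ℝ (B j.succ))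
    have ha := hc.smul hsb hh₁pos
    have hw := (ClExp.const hh₁pos (θ0k 0)).add hexpC
    have haw := ha.smul hw hh₁pos
    have hfinal := (ClExp.const hh₁pos (B j.succ)).sub haw
    refine ⟨_, hfinal.congr (fun h hh => ?_), ?_⟩
    · simp only [hθdef, smul_eq_mul]
    · have hz : ⟪B j.succ, θ0k 0⟫ = 0 := by
        rw [← hB0, hBo j.succ 0]
        simp [Fin.succ_ne_zero]
      simp only [zero_add, Finset.range_one, Finset.sum_singleton, Nat.sub_self,
        hz, smul_eq_mul, zero_mul, mul_zero, zero_smul, sub_zero, reduceIte]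
  choose θk hθk hθk0 using hθexp
  refine ⟨h₁, hh₁pos, hh₁le, θ, θk, fun j N => hθk j N, ?_, ?_⟩
  · intro h hh
    have huu : ⟪θ0 h, θ0 h⟫ = 1 := by
      rw [real_inner_self_eq_norm_mul_norm, hunit1 h hh]; norm_num
    have hsne' := hsne h hh
    have hv₀ : ⟪θ0k 0, θ0k 0⟫ = 1 := by
      rw [real_inner_self_eq_norm_mul_norm, hnorm0]; norm_num
    have hvz : ∀ j : Fin q, ⟪B j.succ, θ0k 0⟫ = 0 := by
      intro j
      rw [← hB0, hBo j.succ 0]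
      simp [Fin.succ_ne_zero]
    have hortho : Orthonormal ℝ
        (Fin.cons (θ0 h) (fun j => θ j h) : Fin (q+1) → _) := by
      rw [orthonormal_iff_ite]
      intro i j'
      refine Fin.cases ?_ ?_ i
      · refine Fin.cases ?_ ?_ j'
        · simpa using huu
        · intro j
          simp only [Fin.cons_zero, Fin.cons_succ]
          rw [if_neg (Fin.succ_ne_zero j).symm]
          simp only [hθdef]
          exact ortho_aux2 (θ0 h) (θ0k 0) (B j.succ) huu (hvz j) hsne'
      · intro i'
        refine Fin.cases ?_ ?_ j'
        · simp only [Fin.cons_zero, Fin.cons_succ]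
          rw [if_neg (Fin.succ_ne_zero i')]
          rw [real_inner_comm]
          simp only [hθdef]
          exact ortho_aux2 (θ0 h) (θ0k 0) (B i'.succ) huu (hvz i') hsne'
        · intro j''
          simp only [Fin.cons_succ]
          simp only [hθdef]
          rw [ortho_aux (θ0 h) (θ0k 0) (B i'.succ) (B j''.succ) huu hv₀
            (hvz i') (hvz j'') hsne']
          rw [hBo i'.succ j''.succ]
    refine ⟨hortho, ?_⟩
    apply LinearIndependent.span_eq_top_of_card_eq_finrank hortho.linearIndependent
    simp [finrank_euclideanSpace_fin]
  · intro j
    rw [hθk0 j, ← hB0, hBo j.succ 0]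
    simp [Fin.succ_ne_zero]
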